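/- Let (a_i), (b_i), (Q_i) be positive sequences with Q_i Q_1 a_i = Q_{i+1} b_{i+1} for all i, and suppose b_i ≥ Q_1 a_i for all i ≥ N_z. Fix Ñ ≥ N_z + 1, and define A in weak form: ∑ Q_i (Ah)_i φ_i = ∑_{i≥Ñ} Q_i Q_1 a_i (h_i - h_{i+1})(φ_{i+1} - φ_i - φ_1) - Q_{Ñ-1}Q_1 a_{Ñ-1} h_Ñ (φ_Ñ - φ_{Ñ-1} - φ_1). Then for sequences h of finite support with ∑ Q_i i h_i = 0, taking φ_i = i·sgn(h_i), one has ⟨sgn h, Ah⟩_{X₁*,X₁} ≤ 0; hence A is dissipative on X₁ = ℓ¹(Q_i i). -/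
import Mathlib

private lemma mul_sign_self' (x : ℝ) : x * Real.sign x = |x| := by
  rcases lt_trichotomy x 0 with hx | hx | hx
  · rw [Real.sign_of_neg hx, abs_of_neg hx]; ring
  · simp [hx]
  · rw [Real.sign_of_pos hx, abs_of_pos hx]; ring

private lemma mul_sign_le' (x y : ℝ) : x * Real.sign y ≤ |x| := by
  have hs : |Real.sign y| ≤ 1 := by
    rcases lt_trichotomy y 0 with hy | hy | hy
    · rw [Real.sign_of_neg hy]; norm_num
    · simp [hy]
    · rw [Real.sign_of_pos hy]; norm_num
  calc x * Real.sign y ≤ |x * Real.sign y| := le_abs_self _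
    _ = |x| * |Real.sign y| := abs_mul _ _
    _ ≤ |x| * 1 := mul_le_mul_of_nonneg_left hs (abs_nonneg x)
    _ = |x| := mul_one _

private lemma inner_bound' (A B sA sB s1 t : ℝ)
    (e1 : A * sA = |A|) (e2 : B * sB = |B|)
    (l1 : A * sB ≤ |A|) (l2 : B * sA ≤ |B|) (ht : 0 ≤ t) :
    (A - B) * ((t + 1) * sB - t * sA - s1) ≤ (|A| - A * s1) - (|B| - B * s1) := by
  have e1' : t * (A * sA) = t * |A| := by rw [e1]
  have e2' : t * (B * sB) = t * |B| := by rw [e2]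
  have l1' : t * (A * sB) ≤ t * |A| := mul_le_mul_of_nonneg_left l1 ht
  have l2' : t * (B * sA) ≤ t * |B| := mul_le_mul_of_nonneg_left l2 ht
  nlinarith [e1, e2, l1, l2]

private lemma boundary_bound' (A sA sP s1 t : ℝ) (e1 : A * sA = |A|)
    (l2 : A * sP ≤ |A|) (ht : 0 ≤ t) :
    |A| - A * s1 ≤ A * ((t + 1) * sA - t * sP - s1) := by
  have l2' : t * (A * sP) ≤ t * |A| := mul_le_mul_of_nonneg_left l2 ht
  have e1' : t * (A * sA) = t * |A| := by rw [e1]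
  nlinarith [e1]

private lemma abel_key' (c g : ℕ → ℝ) (Ntil N : ℕ) (hN : Ntil ≤ N) :
    ∑ i ∈ Finset.Ico Ntil N, (c i * g i - c i * g (i + 1))
      = c (Ntil - 1) * g Ntil - c (N - 1) * g N
        + ∑ i ∈ Finset.Ico Ntil N, (c i - c (i - 1)) * g i := by
  induction N, hN using Nat.le_induction with
  | base => simp
  | succ N hN ih =>
      rw [Finset.sum_Ico_succ_top hN, Finset.sum_Ico_succ_top hN, ih]
      have h1 : N + 1 - 1 = N := rfl
      rw [h1]
      ring

/-- Dissipativity of the truncated transport part `A` of the linearized Becker–Döring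
operator on `X₁ = ℓ¹(Q_i i)`: testing the weak form against `φ_i = i · sgn(h_i)` gives a
nonpositive pairing for every finitely supported `h` with zero mass. -/
theorem truncated_transport_dissipative_X1 (a b Q : ℕ → ℝ) (Nz Ntil : ℕ)
    (hpos : ∀ i, 1 ≤ i → 0 < a i ∧ 0 < b i ∧ 0 < Q i)
    (hdb : ∀ i, 1 ≤ i → Q i * Q 1 * a i = Q (i + 1) * b (i + 1))
    (hfrag : ∀ i, Nz ≤ i → Q 1 * a i ≤ b i)
    (hNz : 1 ≤ Nz) (hNtil : Nz + 1 ≤ Ntil)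
    (h : ℕ → ℝ) (hsupp : (Function.support h).Finite)
    (hmass : (∑' i : ℕ, Q i * (i : ℝ) * h i) = 0) :
    (∑' i : ℕ, if Ntil ≤ i then
        Q i * Q 1 * a i * (h i - h (i + 1)) *
          (((i + 1 : ℕ) : ℝ) * Real.sign (h (i + 1)) - (i : ℝ) * Real.sign (h i)
            - (1 : ℝ) * Real.sign (h 1))
      else 0)
      - Q (Ntil - 1) * Q 1 * a (Ntil - 1) * h Ntil *
          ((Ntil : ℝ) * Real.sign (h Ntil) - ((Ntil - 1 : ℕ) : ℝ) * Real.sign (h (Ntil - 1))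
            - (1 : ℝ) * Real.sign (h 1)) ≤ 0 := by
  set s1 := Real.sign (h 1) with hs1def
  set c : ℕ → ℝ := fun i => Q i * Q 1 * a i with hcdef
  set g : ℕ → ℝ := fun i => |h i| - h i * s1 with hgdef
  have hgnn : ∀ i, 0 ≤ g i := fun i => sub_nonneg.mpr (mul_sign_le' (h i) (h 1))
  have hcpos : ∀ i, 1 ≤ i → 0 < c i := by
    intro i hi
    have h1 := hpos i hi
    have h2 := hpos 1 le_rfl
    exact mul_pos (mul_pos h1.2.2 h2.2.2) h1.1
  -- choose N past the support of h
  obtain ⟨N, hNge, hN0⟩ : ∃ N, Ntil + 1 ≤ N ∧ ∀ i, N ≤ i → h i = 0 := by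
    refine ⟨max (Ntil + 1) (hsupp.toFinset.sup id + 1), le_max_left _ _, ?_⟩
    intro i hi
    by_contra hne
    have hmem : i ∈ hsupp.toFinset := by
      simp [Set.Finite.mem_toFinset, Function.mem_support, hne]
    have hle : id i ≤ hsupp.toFinset.sup id := Finset.le_sup hmem
    simp only [id_eq] at hle
    have := le_trans (le_max_right (Ntil + 1) (hsupp.toFinset.sup id + 1)) hi
    omega
  -- rewrite the tsum as a finite sum over Ico Ntil N
  have htsum : (∑' i : ℕ, if Ntil ≤ i then
        Q i * Q 1 * a i * (h i - h (i + 1)) *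
          (((i + 1 : ℕ) : ℝ) * Real.sign (h (i + 1)) - (i : ℝ) * Real.sign (h i)
            - (1 : ℝ) * s1)
      else 0)
      = ∑ i ∈ Finset.Ico Ntil N,
          Q i * Q 1 * a i * (h i - h (i + 1)) *
            (((i + 1 : ℕ) : ℝ) * Real.sign (h (i + 1)) - (i : ℝ) * Real.sign (h i)
              - (1 : ℝ) * s1) := by
    rw [tsum_eq_sum (s := Finset.range N) (by
      intro i hi
      have hiN : N ≤ i := by simpa using Nat.le_of_not_lt (by simpa using hi)
      have h1 : h i = 0 := hN0 i hiN
      have h2 : h (i + 1) = 0 := hN0 (i + 1) (by omega)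
      split_ifs <;> simp [h1, h2])]
    rw [Finset.range_eq_Ico, ← Finset.sum_Ico_consecutive _ (Nat.zero_le Ntil) (by omega : Ntil ≤ N)]
    have hz : ∑ i ∈ Finset.Ico 0 Ntil, (if Ntil ≤ i then
        Q i * Q 1 * a i * (h i - h (i + 1)) *
          (((i + 1 : ℕ) : ℝ) * Real.sign (h (i + 1)) - (i : ℝ) * Real.sign (h i)
            - (1 : ℝ) * s1) else 0) = 0 := by
      apply Finset.sum_eq_zero
      intro i hi
      rw [if_neg]
      simp only [Finset.mem_Ico] at hi
      omega
    rw [hz, zero_add]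
    refine Finset.sum_congr rfl fun i hi => ?_
    exact if_pos (Finset.mem_Ico.mp hi).1
  rw [htsum]
  -- termwise bound
  have hterm : ∀ i ∈ Finset.Ico Ntil N,
      Q i * Q 1 * a i * (h i - h (i + 1)) *
        (((i + 1 : ℕ) : ℝ) * Real.sign (h (i + 1)) - (i : ℝ) * Real.sign (h i)
          - (1 : ℝ) * s1)
      ≤ c i * g i - c i * g (i + 1) := by
    intro i hi
    have hi1 : 1 ≤ i := by
      simp only [Finset.mem_Ico] at hi; omega
    have hci : 0 < c i := hcpos i hi1
    have hin : (h i - h (i + 1)) *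
        (((i : ℝ) + 1) * Real.sign (h (i + 1)) - (i : ℝ) * Real.sign (h i) - s1)
        ≤ (|h i| - h i * s1) - (|h (i + 1)| - h (i + 1) * s1) :=
      inner_bound' (h i) (h (i + 1)) (Real.sign (h i)) (Real.sign (h (i + 1))) s1 (i : ℝ)
        (mul_sign_self' _) (mul_sign_self' _) (mul_sign_le' _ _) (mul_sign_le' _ _)
        (Nat.cast_nonneg i)
    have := mul_le_mul_of_nonneg_left hin (le_of_lt hci)
    calc Q i * Q 1 * a i * (h i - h (i + 1)) *
          (((i + 1 : ℕ) : ℝ) * Real.sign (h (i + 1)) - (i : ℝ) * Real.sign (h i)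
            - (1 : ℝ) * s1)
        = c i * ((h i - h (i + 1)) *
            (((i : ℝ) + 1) * Real.sign (h (i + 1)) - (i : ℝ) * Real.sign (h i) - s1)) := by
          push_cast; ring
      _ ≤ c i * ((|h i| - h i * s1) - (|h (i + 1)| - h (i + 1) * s1)) := this
      _ = c i * g i - c i * g (i + 1) := by simp only [hgdef]; ring
  have hsum1 : ∑ i ∈ Finset.Ico Ntil N,
      Q i * Q 1 * a i * (h i - h (i + 1)) *
        (((i + 1 : ℕ) : ℝ) * Real.sign (h (i + 1)) - (i : ℝ) * Real.sign (h i)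
          - (1 : ℝ) * s1)
      ≤ ∑ i ∈ Finset.Ico Ntil N, (c i * g i - c i * g (i + 1)) :=
    Finset.sum_le_sum hterm
  -- Abel summation
  have habel := abel_key' c g Ntil N (by omega)
  have hgN : g N = 0 := by
    simp [hgdef, hN0 N le_rfl]
  -- the difference sum is nonpositive
  have hdiff : ∑ i ∈ Finset.Ico Ntil N, (c i - c (i - 1)) * g i ≤ 0 := by
    apply Finset.sum_nonpos
    intro i hi
    have hi2 : Nz + 1 ≤ i := by
      simp only [Finset.mem_Ico] at hi; omega
    have hdb' := hdb (i - 1) (by omega)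
    have hi1 : i - 1 + 1 = i := by omega
    rw [hi1] at hdb'
    have hQi : 0 < Q i := (hpos i (by omega)).2.2
    have hfr := hfrag i (by omega)
    have hcneg : c i - c (i - 1) ≤ 0 := by
      simp only [hcdef]
      rw [hdb']
      nlinarith
    exact mul_nonpos_of_nonpos_of_nonneg hcneg (hgnn i)
  -- boundary term
  have hbd : - (Q (Ntil - 1) * Q 1 * a (Ntil - 1) * h Ntil *
      ((Ntil : ℝ) * Real.sign (h Ntil) - ((Ntil - 1 : ℕ) : ℝ) * Real.sign (h (Ntil - 1))
        - (1 : ℝ) * s1)) ≤ - (c (Ntil - 1) * g Ntil) := by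
    have hc' : 0 < c (Ntil - 1) := hcpos (Ntil - 1) (by omega)
    have hcast : ((Ntil - 1 : ℕ) : ℝ) = (Ntil : ℝ) - 1 := by
      have : (1 : ℕ) ≤ Ntil := by omega
      push_cast [this]; ring
    have ht : (0 : ℝ) ≤ (Ntil : ℝ) - 1 := by
      have h1 : (1 : ℝ) ≤ (Ntil : ℝ) := by exact_mod_cast (by omega : 1 ≤ Ntil)
      linarith
    have hin : |h Ntil| - h Ntil * s1 ≤ h Ntil *
        ((((Ntil : ℝ) - 1) + 1) * Real.sign (h Ntil) - ((Ntil : ℝ) - 1) * Real.sign (h (Ntil - 1)) - s1) :=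
      boundary_bound' (h Ntil) (Real.sign (h Ntil)) (Real.sign (h (Ntil - 1))) s1
        ((Ntil : ℝ) - 1) (mul_sign_self' _) (mul_sign_le' _ _) ht
    have := mul_le_mul_of_nonneg_left hin (le_of_lt hc')
    have heq : Q (Ntil - 1) * Q 1 * a (Ntil - 1) * h Ntil *
        ((Ntil : ℝ) * Real.sign (h Ntil) - ((Ntil - 1 : ℕ) : ℝ) * Real.sign (h (Ntil - 1))
          - (1 : ℝ) * s1)
        = c (Ntil - 1) * (h Ntil *
            ((((Ntil : ℝ) - 1) + 1) * Real.sign (h Ntil)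
              - ((Ntil : ℝ) - 1) * Real.sign (h (Ntil - 1)) - s1)) := by
      rw [hcast]; simp only [hcdef]; ring
    have hge : c (Ntil - 1) * g Ntil ≤ Q (Ntil - 1) * Q 1 * a (Ntil - 1) * h Ntil *
        ((Ntil : ℝ) * Real.sign (h Ntil) - ((Ntil - 1 : ℕ) : ℝ) * Real.sign (h (Ntil - 1))
          - (1 : ℝ) * s1) := by
      rw [heq]
      calc c (Ntil - 1) * g Ntil = c (Ntil - 1) * (|h Ntil| - h Ntil * s1) := by
            simp only [hgdef]
        _ ≤ _ := this
    linarith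
  have hfinal : ∑ i ∈ Finset.Ico Ntil N, (c i * g i - c i * g (i + 1))
      - c (Ntil - 1) * g Ntil ≤ 0 := by
    rw [habel, hgN]
    simp only [mul_zero]
    linarith
  linarith
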